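/- For any β > 0, -ln Z_β(x) = ∫₀^β E_{h∼G_γ(x)}[L̂(h,x)] dγ. -/

import Mathlib

open MeasureTheory
open scoped ENNReal NNReal

/-- The partition function `Z_β(x) = ∫ exp (-β L̂(h,x)) dπ(h)` (the sample `x` is fixed). -/
noncomputable def partitionZ {H : Type*} [MeasurableSpace H] (pri : Measure H)
    (Lhat : H → ℝ) (β : ℝ) : ℝ :=
  ∫ h, Real.exp (-β * Lhat h) ∂pri

/-- The Gibbs posterior `G_β(x)`, with density `exp(-β L̂(h,x))/Z_β(x)` w.r.t. the prior `π`. -/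
noncomputable def gibbs {H : Type*} [MeasurableSpace H] (pri : Measure H)
    (Lhat : H → ℝ) (β : ℝ) : Measure H :=
  pri.withDensity (fun h => ENNReal.ofReal (Real.exp (-β * Lhat h) / partitionZ pri Lhat β))

private lemma exp_aux_le {L m γ₀ γ : ℝ} (hL0 : 0 ≤ L) (hLm : L ≤ m)
    (hγ : γ ∈ Metric.ball γ₀ 1) : Real.exp (-γ * L) ≤ Real.exp ((|γ₀| + 1) * m) := by
  have hγabs : |γ| ≤ |γ₀| + 1 := by
    have := abs_sub_abs_le_abs_sub γ γ₀
    have h2 : |γ - γ₀| < 1 := by simpa [Real.dist_eq] using hγ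
    linarith
  apply Real.exp_le_exp.2
  calc -γ * L ≤ |γ| * L := by nlinarith [neg_abs_le γ]
    _ ≤ (|γ₀| + 1) * m := by nlinarith [abs_nonneg γ]

/-- Differentiation under the integral sign for `γ ↦ ∫ g h * exp (-γ * L h)`. -/
private lemma key_hasDerivAt {H : Type*} [MeasurableSpace H] (pri : Measure H)
    [IsProbabilityMeasure pri]
    (Lhat : H → ℝ) (hmeas : Measurable Lhat) (hnonneg : ∀ h, 0 ≤ Lhat h)
    (m : ℝ) (hbound : ∀ h, Lhat h ≤ m)
    (g : H → ℝ) (hg : Measurable g) (K : ℝ) (hgK : ∀ h, |g h| ≤ K) (hK : 0 ≤ K) (γ₀ : ℝ) :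
    HasDerivAt (fun γ => ∫ h, g h * Real.exp (-γ * Lhat h) ∂pri)
      (∫ h, g h * (Real.exp (-γ₀ * Lhat h) * (-1 * Lhat h)) ∂pri) γ₀ := by
  have hFmeas : ∀ γ : ℝ, Measurable (fun h => g h * Real.exp (-γ * Lhat h)) :=
    fun γ => hg.mul (hmeas.const_mul (-γ)).exp
  have hF'meas : Measurable (fun h => g h * (Real.exp (-γ₀ * Lhat h) * (-1 * Lhat h))) :=
    hg.mul ((hmeas.const_mul (-γ₀)).exp.mul (hmeas.const_mul (-1)))
  have := hasDerivAt_integral_of_dominated_loc_of_deriv_le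
    (μ := pri) (F := fun γ h => g h * Real.exp (-γ * Lhat h))
    (F' := fun γ h => g h * (Real.exp (-γ * Lhat h) * (-1 * Lhat h)))
    (x₀ := γ₀) (bound := fun _ => K * (Real.exp ((|γ₀| + 1) * m) * m))
    (Metric.ball_mem_nhds γ₀ one_pos)
    (Filter.Eventually.of_forall fun γ => (hFmeas γ).aestronglyMeasurable)
    ?_ hF'meas.aestronglyMeasurable ?_ (integrable_const _) ?_
  · exact this.2
  · -- integrability of F γ₀
    apply (integrable_const (K * Real.exp (|γ₀| * m))).mono' (hFmeas γ₀).aestronglyMeasurable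
    refine Filter.Eventually.of_forall fun h => ?_
    rw [norm_mul, Real.norm_eq_abs, Real.norm_eq_abs, Real.abs_exp]
    have h1 : Real.exp (-γ₀ * Lhat h) ≤ Real.exp (|γ₀| * m) := by
      apply Real.exp_le_exp.2
      nlinarith [neg_abs_le γ₀, hnonneg h, hbound h, abs_nonneg γ₀]
    exact mul_le_mul (hgK h) h1 (Real.exp_nonneg _) hK
  · -- bound
    refine Filter.Eventually.of_forall fun h γ hγ => ?_
    have h1 := exp_aux_le (hnonneg h) (hbound h) hγ
    have h2 : |Lhat h| ≤ m := by rw [abs_of_nonneg (hnonneg h)]; exact hbound h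
    simp only [norm_mul, Real.norm_eq_abs, abs_mul, abs_neg, abs_one, Real.abs_exp, one_mul]
    exact mul_le_mul (hgK h)
      (mul_le_mul h1 h2 (abs_nonneg _) (Real.exp_nonneg _)) (by positivity) hK
  · -- differentiability
    refine Filter.Eventually.of_forall fun h γ _ => ?_
    have h1 : HasDerivAt (fun γ : ℝ => -γ * Lhat h) (-1 * Lhat h) γ := by
      exact (hasDerivAt_neg γ).mul_const (Lhat h)
    exact h1.exp.const_mul (g h)

/-- for any `β > 0`,
`-ln Z_β(x) = ∫₀^β E_{h∼G_γ(x)}[L̂(h,x)] dγ`. -/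
theorem neg_log_partition_eq_integral {H : Type*} [MeasurableSpace H]
    (pri : Measure H) [IsProbabilityMeasure pri]
    (Lhat : H → ℝ) (hmeas : Measurable Lhat) (hnonneg : ∀ h, 0 ≤ Lhat h)
    (m : ℝ) (hbound : ∀ h, Lhat h ≤ m) (β : ℝ) (hβ : 0 < β) :
    -Real.log (partitionZ pri Lhat β)
      = ∫ γ in (0 : ℝ)..β, ∫ h, Lhat h ∂(gibbs pri Lhat γ) := by
  have hm : 0 ≤ m := by
    obtain ⟨h⟩ : Nonempty H := by
      by_contra hne
      have h0 : pri Set.univ = 0 := by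
        rw [Set.univ_eq_empty_iff.2 (not_nonempty_iff.1 hne)]; simp
      simp [measure_univ] at h0
    exact le_trans (hnonneg h) (hbound h)
  set Z : ℝ → ℝ := fun γ => partitionZ pri Lhat γ with hZdef
  set E : ℝ → ℝ := fun γ => ∫ h, Lhat h * Real.exp (-γ * Lhat h) ∂pri with hEdef
  -- derivative of Z
  have hZderiv : ∀ γ : ℝ, HasDerivAt Z (-E γ) γ := by
    intro γ
    have hk := key_hasDerivAt pri Lhat hmeas hnonneg m hbound (fun _ => 1) measurable_const
      1 (fun _ => by norm_num) one_pos.le γ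
    have heq1 : (fun γ : ℝ => ∫ h, (1:ℝ) * Real.exp (-γ * Lhat h) ∂pri) = Z := by
      funext γ; simp [hZdef, partitionZ]
    have heq2 : (∫ h, (1:ℝ) * (Real.exp (-γ * Lhat h) * (-1 * Lhat h)) ∂pri) = -E γ := by
      have heq : (fun h => (1:ℝ) * (Real.exp (-γ * Lhat h) * (-1 * Lhat h)))
          = fun h => -(Lhat h * Real.exp (-γ * Lhat h)) := by funext h; ring
      rw [heq, integral_neg]
    rw [heq1, heq2] at hk
    exact hk
  -- E is differentiable, hence continuous
  have hEderiv : ∀ γ : ℝ, HasDerivAt E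
      (∫ h, Lhat h * (Real.exp (-γ * Lhat h) * (-1 * Lhat h)) ∂pri) γ := fun γ =>
    key_hasDerivAt pri Lhat hmeas hnonneg m hbound Lhat hmeas m
      (fun h => by rw [abs_of_nonneg (hnonneg h)]; exact hbound h) hm γ
  have hEcont : Continuous E :=
    continuous_iff_continuousAt.2 fun γ => (hEderiv γ).continuousAt
  have hZcont : Continuous Z :=
    continuous_iff_continuousAt.2 fun γ => (hZderiv γ).continuousAt
  -- Z is positive
  have hZpos : ∀ γ : ℝ, 0 < Z γ := by
    intro γ
    have hint : Integrable (fun h => Real.exp (-γ * Lhat h)) pri := by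
      apply (integrable_const (Real.exp (|γ| * m))).mono'
        ((hmeas.const_mul (-γ)).exp).aestronglyMeasurable
      refine Filter.Eventually.of_forall fun h => ?_
      rw [Real.norm_eq_abs, Real.abs_exp]
      apply Real.exp_le_exp.2
      nlinarith [neg_abs_le γ, hnonneg h, hbound h, abs_nonneg γ]
    have hle : Real.exp (-(|γ| * m)) ≤ Z γ := by
      have hmono := integral_mono (μ := pri) (integrable_const (Real.exp (-(|γ| * m)))) hint
        (fun h => Real.exp_le_exp.2 (by nlinarith [mul_le_mul_of_nonneg_right (neg_le_neg (le_abs_self γ)) (hnonneg h), mul_le_mul_of_nonneg_left (hbound h) (abs_nonneg γ)]))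
      have : Z γ = ∫ h, Real.exp (-γ * Lhat h) ∂pri := rfl
      rw [this]
      simpa using hmono
    exact lt_of_lt_of_le (Real.exp_pos _) hle
  -- Gibbs expectation
  have hG : ∀ γ : ℝ, (∫ h, Lhat h ∂(gibbs pri Lhat γ)) = E γ / Z γ := by
    intro γ
    have hdmeas : Measurable fun h => (Real.exp (-γ * Lhat h) / partitionZ pri Lhat γ).toNNReal :=
      ((hmeas.const_mul (-γ)).exp.div_const _).real_toNNReal
    have hgd : gibbs pri Lhat γ = pri.withDensity
        (fun h => ((Real.exp (-γ * Lhat h) / partitionZ pri Lhat γ).toNNReal : ℝ≥0∞)) := rfl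
    rw [hgd, integral_withDensity_eq_integral_smul hdmeas]
    have hZγ : 0 < partitionZ pri Lhat γ := hZpos γ
    have heq : (fun h => (Real.exp (-γ * Lhat h) / partitionZ pri Lhat γ).toNNReal • Lhat h)
        = fun h => (Lhat h * Real.exp (-γ * Lhat h)) / Z γ := by
      funext h
      rw [NNReal.smul_def, smul_eq_mul, Real.coe_toNNReal _ (by positivity)]
      show Real.exp (-γ * Lhat h) / partitionZ pri Lhat γ * Lhat h
        = Lhat h * Real.exp (-γ * Lhat h) / partitionZ pri Lhat γ
      ring
    rw [heq, integral_div]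
  -- FTC
  have hftc : ∫ γ in (0:ℝ)..β, E γ / Z γ = -Real.log (Z β) - -Real.log (Z 0) := by
    apply intervalIntegral.integral_eq_sub_of_hasDerivAt
    · intro γ _
      have hd := ((hZderiv γ).log (hZpos γ).ne').neg
      have heq : -(-E γ / Z γ) = E γ / Z γ := by ring
      rwa [heq] at hd
    · exact (hEcont.div hZcont fun γ => (hZpos γ).ne').intervalIntegrable 0 β
  have hZ0 : Z 0 = 1 := by
    simp [hZdef, partitionZ]
  calc -Real.log (partitionZ pri Lhat β) = -Real.log (Z β) - -Real.log (Z 0) := by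
        rw [hZ0]; simp; rfl
    _ = ∫ γ in (0:ℝ)..β, E γ / Z γ := hftc.symm
    _ = ∫ γ in (0:ℝ)..β, ∫ h, Lhat h ∂(gibbs pri Lhat γ) := by
        apply intervalIntegral.integral_congr
        intro γ _
        exact (hG γ).symm
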